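/- Let $S, T \subseteq [U]$ with $|S| = k$, $|T| = m$. In $\mathbb{R}^{U+2}$, define the points $w = (1,1,0,\ldots,0)$, $x_1 = (1,-1,0,\ldots,0)$, $x_2 = (-1,1,0,\ldots,0)$, $s = 0$, $y_1 = (1,0,\ldots,0)$, $y_2 = (0,1,0,\ldots,0)$, $\tilde{a}_i = (1,1,e_i)$, $\tilde{b}_i = (0,0,e_i)$ where $e_i \in \mathbb{R}^U$ is the $i$-th standard basis vector. For $S = \{s_1, \ldots, s_k\}$ and $T = \{t_1, \ldots, t_m\}$, define the point sequences $P = w, x_1, s, \tilde{b}_{t_1}, s, \tilde{b}_{t_2}, \ldots, s, \tilde{b}_{t_m}, s, x_2, w$ and $Q = y_1, \tilde{a}_{s_1}, y_2, y_1, \tilde{a}_{s_2}, y_2, \ldots, y_1, \tilde{a}_{s_k}, y_2$. If $S \cap T \ne \emptyset$ then $d_{dF}(P, Q) \le \sqrt{2}$, and if $S \cap T = \emptyset$ then $d_{dF}(P, Q) \ge \sqrt{3}$. -/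

import Mathlib

open Set

/-- Continuous Fréchet distance between two curves parametrized on `[0,1]`. -/
noncomputable def frechetDist {E : Type*} [PseudoMetricSpace E] (f g : ℝ → E) : ℝ :=
  sInf { r : ℝ | ∃ φ ψ : ℝ → ℝ,
    ContinuousOn φ (Set.Icc 0 1) ∧ ContinuousOn ψ (Set.Icc 0 1) ∧
    MonotoneOn φ (Set.Icc 0 1) ∧ MonotoneOn ψ (Set.Icc 0 1) ∧
    φ 0 = 0 ∧ φ 1 = 1 ∧ ψ 0 = 0 ∧ ψ 1 = 1 ∧
    ∀ t ∈ Set.Icc (0:ℝ) 1, dist (f (φ t)) (g (ψ t)) ≤ r }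

/-- The directed line segment from `a` to `b` as a curve on `[0,1]`. -/
def seg {E : Type*} [AddCommGroup E] [Module ℝ E] (a b : E) : ℝ → E :=
  fun s => (1 - s) • a + s • b

/-- Polygonal curve with vertices `p 0, …, p n`, parametrized on `[0,1]`. -/
noncomputable def polyline {E : Type*} [AddCommGroup E] [Module ℝ E] {n : ℕ}
    (p : Fin (n + 1) → E) (s : ℝ) : E :=
  let u : ℝ := s * n
  let i : ℕ := min ⌊u⌋₊ (n - 1)
  (1 - (u - i)) • p ⟨min i n, Nat.lt_succ_of_le (Nat.min_le_right _ _)⟩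
    + (u - i) • p ⟨min (i + 1) n, Nat.lt_succ_of_le (Nat.min_le_right _ _)⟩

/-- Polygonal curve through the points of a list. -/
noncomputable def polylineL {E : Type*} [AddCommGroup E] [Module ℝ E] (l : List E) : ℝ → E :=
  polyline (n := l.length - 1) (fun i => l.getD i.val 0)

/-- `τ` restricted to `[0,1]` is the polygonal curve with vertices
`τ (t 0), …, τ (t m)` at parameters `0 = t 0 < ⋯ < t m = 1`. -/
def IsPolylineOn (τ : ℝ → ℝ) (m : ℕ) (t : ℕ → ℝ) : Prop :=
  t 0 = 0 ∧ t m = 1 ∧ (∀ i < m, t i < t (i + 1)) ∧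
  ∀ i < m, ∀ s, t i ≤ s → s ≤ t (i + 1) →
    τ s = τ (t i) + (s - t i) / (t (i + 1) - t i) * (τ (t (i + 1)) - τ (t i))

/-- `s` is the parameter of a vertex (local extremum) of the time series `τ`. -/
def VertexAt (τ : ℝ → ℝ) (s : ℝ) : Prop :=
  s ∈ Set.Icc (0:ℝ) 1 ∧
    (IsLocalMaxOn τ (Set.Icc 0 1) s ∨ IsLocalMinOn τ (Set.Icc 0 1) s)

/-- A `δ`-signature of `τ : [0,1] → ℝ`, given by parameters
`0 = t 0 < t 1 < ⋯ < t ℓ = 1` (so the signature has `ℓ + 1` vertices and `ℓ ≥ 1` edges);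
the signature curve itself is `polyline (fun i => τ (t i))`. -/
structure IsDeltaSignature (δ : ℝ) (τ : ℝ → ℝ) (ℓ : ℕ) (t : ℕ → ℝ) : Prop where
  one_le : 1 ≤ ℓ
  mono : ∀ i < ℓ, t i < t (i + 1)
  start : t 0 = 0
  finish : t ℓ = 1
  nondeg : ∀ i, 1 ≤ i → i < ℓ →
    τ (t i) ∉ Set.uIcc (τ (t (i - 1))) (τ (t (i + 1)))
  dir_up : ∀ i < ℓ, τ (t i) < τ (t (i + 1)) →
    ∀ a b, t i ≤ a → a ≤ b → b ≤ t (i + 1) → τ a - τ b ≤ 2 * δ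
  dir_down : ∀ i < ℓ, τ (t (i + 1)) < τ (t i) →
    ∀ a b, t i ≤ a → a ≤ b → b ≤ t (i + 1) → τ b - τ a ≤ 2 * δ
  minedge_int : ∀ i, 1 ≤ i → i ≤ ℓ - 2 → 2 * δ < |τ (t (i + 1)) - τ (t i)|
  minedge_bnd : ∀ i < ℓ, (i = 0 ∨ i = ℓ - 1) → δ < |τ (t (i + 1)) - τ (t i)|
  range_int : ∀ i, 1 ≤ i → i ≤ ℓ - 2 → ∀ s, t i ≤ s → s ≤ t (i + 1) →
    τ s ∈ Set.uIcc (τ (t i)) (τ (t (i + 1)))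
  range_first : 2 ≤ ℓ → ∀ s, t 0 ≤ s → s ≤ t 1 →
    τ s ∈ Set.uIcc (τ (t 0)) (τ (t 1)) ∪ Set.Icc (τ (t 0) - δ) (τ (t 0) + δ)
  range_last : 2 ≤ ℓ → ∀ s, t (ℓ - 1) ≤ s → s ≤ t ℓ →
    τ s ∈ Set.uIcc (τ (t (ℓ - 1))) (τ (t ℓ)) ∪ Set.Icc (τ (t ℓ) - δ) (τ (t ℓ) + δ)
  range_single : ℓ = 1 → ∀ s, (0:ℝ) ≤ s → s ≤ 1 →
    τ s ∈ Set.uIcc (τ (t 0)) (τ (t 1)) ∪ Set.Icc (τ (t 0) - δ) (τ (t 0) + δ)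
      ∪ Set.Icc (τ (t 1) - δ) (τ (t 1) + δ)

/-- One step of a traversal: each index advances by 0 or 1, at least one advances. -/
def TravStep (a b : ℕ × ℕ) : Prop :=
  a.1 ≤ b.1 ∧ b.1 ≤ a.1 + 1 ∧ a.2 ≤ b.2 ∧ b.2 ≤ a.2 + 1 ∧ a ≠ b

/-- A traversal of two point sequences of lengths `m` and `k` (0-based indices). -/
def IsTraversal (m k : ℕ) (T : List (ℕ × ℕ)) : Prop :=
  T.head? = some (0, 0) ∧ T.getLast? = some (m - 1, k - 1) ∧ List.Chain' TravStep T

/-- Discrete Fréchet distance between the point sequences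
`p 0, …, p (m-1)` and `q 0, …, q (k-1)`. -/
noncomputable def ddF {E : Type*} [PseudoMetricSpace E] (m k : ℕ) (p q : ℕ → E) : ℝ :=
  sInf { r : ℝ | ∃ T : List (ℕ × ℕ), IsTraversal m k T ∧
    ∀ ij ∈ T, dist (p ij.1) (q ij.2) ≤ r }

/-- The subsequence of local extrema (vertex sequence) of a list of values. -/
def vertexSeq {α : Type*} [LinearOrder α] : List α → List α
  | [] => []
  | [a] => [a]
  | [a, b] => [a, b]
  | a :: b :: c :: rest =>
    if (a ≤ b ∧ b ≤ c) ∨ (c ≤ b ∧ b ≤ a) then vertexSeq (a :: c :: rest)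
    else a :: vertexSeq (b :: c :: rest)
termination_by l => l.length

/-- A point of `ℝ^{U+2}` given by its coordinate function (on 0-based indices). -/
noncomputable def mkPt (U : ℕ) (f : ℕ → ℝ) : EuclideanSpace ℝ (Fin (U + 2)) :=
  (WithLp.equiv 2 (Fin (U + 2) → ℝ)).symm (fun j => f j.val)

noncomputable def wPt (U : ℕ) : EuclideanSpace ℝ (Fin (U + 2)) :=
  mkPt U (fun j => if j ≤ 1 then 1 else 0)
noncomputable def x1Pt (U : ℕ) : EuclideanSpace ℝ (Fin (U + 2)) :=
  mkPt U (fun j => if j = 0 then 1 else if j = 1 then -1 else 0)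
noncomputable def x2Pt (U : ℕ) : EuclideanSpace ℝ (Fin (U + 2)) :=
  mkPt U (fun j => if j = 0 then -1 else if j = 1 then 1 else 0)
noncomputable def sPt (U : ℕ) : EuclideanSpace ℝ (Fin (U + 2)) :=
  mkPt U (fun _ => 0)
noncomputable def y1Pt (U : ℕ) : EuclideanSpace ℝ (Fin (U + 2)) :=
  mkPt U (fun j => if j = 0 then 1 else 0)
noncomputable def y2Pt (U : ℕ) : EuclideanSpace ℝ (Fin (U + 2)) :=
  mkPt U (fun j => if j = 1 then 1 else 0)
/-- `ã_i = (1,1,e_i)` for `i ∈ [U]` (the coordinate of `e_i` is 0-based index `i + 1`). -/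
noncomputable def aPt (U i : ℕ) : EuclideanSpace ℝ (Fin (U + 2)) :=
  mkPt U (fun j => if j ≤ 1 then 1 else if j = i + 1 then 1 else 0)
/-- `b̃_i = (0,0,e_i)`. -/
noncomputable def bPt (U i : ℕ) : EuclideanSpace ℝ (Fin (U + 2)) :=
  mkPt U (fun j => if j = i + 1 ∧ 2 ≤ j then 1 else 0)

/-- Bob's sequence `P = w, x₁, s, b̃_{t 0}, s, b̃_{t 1}, …, s, b̃_{t (m-1)}, s, x₂, w`
(of length `2m + 5`, 0-based indices). -/
noncomputable def Pseq (U m : ℕ) (t : ℕ → ℕ) : ℕ → EuclideanSpace ℝ (Fin (U + 2)) :=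
  fun i =>
    if i = 0 then wPt U
    else if i = 1 then x1Pt U
    else if i = 2 * m + 2 then sPt U
    else if i = 2 * m + 3 then x2Pt U
    else if i = 2 * m + 4 then wPt U
    else if i % 2 = 0 then sPt U
    else bPt U (t ((i - 3) / 2))

/-- Alice's sequence `Q = y₁, ã_{s 0}, y₂, y₁, ã_{s 1}, y₂, …` (of length `3k`). -/
noncomputable def Qseq (U k : ℕ) (s : ℕ → ℕ) : ℕ → EuclideanSpace ℝ (Fin (U + 2)) :=
  fun i =>
    if i % 3 = 0 then y1Pt U
    else if i % 3 = 1 then aPt U (s (i / 3))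
    else y2Pt U

lemma dist_mkPt (U : ℕ) (f g : ℕ → ℝ) :
    dist (mkPt U f) (mkPt U g) = Real.sqrt (∑ j : Fin (U+2), (f j.val - g j.val)^2) := by
  rw [EuclideanSpace.dist_eq]
  congr 1
  refine Finset.sum_congr rfl fun j _ => ?_
  rw [show (mkPt U f) j = f j.val from rfl, show (mkPt U g) j = g j.val from rfl,
    Real.dist_eq, sq_abs]

lemma sum_ind (U c : ℕ) (hc : c < U+2) (v : ℝ) :
    ∑ j : Fin (U+2), (if j.val = c then v else 0) = v := by
  have h : ∀ j : Fin (U+2), (if j.val = c then v else 0) = (if j = ⟨c, hc⟩ then v else 0) :=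
    fun j => by simp [Fin.ext_iff]
  simp_rw [h]
  simp

lemma canon2 (U : ℕ) (A B : ℝ) :
    ∑ j : Fin (U+2), (if j.val = 0 then A else if j.val = 1 then B else 0)^2
      = A^2 + B^2 := by
  have key : ∀ j : Fin (U+2),
      (if j.val = 0 then A else if j.val = 1 then B else 0)^2
      = (if j.val = 0 then A^2 else 0) + (if j.val = 1 then B^2 else 0) := by
    intro j; split_ifs <;> first | ring1 | (exfalso; omega)
  simp_rw [key, Finset.sum_add_distrib,
    sum_ind U 0 (by omega) (A^2), sum_ind U 1 (by omega) (B^2)]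

lemma canon3 (U u : ℕ) (hu1 : 1 ≤ u) (huU : u ≤ U) (A B C : ℝ) :
    ∑ j : Fin (U+2), (if j.val = 0 then A else if j.val = 1 then B else
      if j.val = u+1 then C else 0)^2 = A^2 + B^2 + C^2 := by
  have key : ∀ j : Fin (U+2),
      (if j.val = 0 then A else if j.val = 1 then B else if j.val = u+1 then C else 0)^2
      = (if j.val = 0 then A^2 else 0) + (if j.val = 1 then B^2 else 0)
        + (if j.val = u+1 then C^2 else 0) := by
    intro j; split_ifs <;> first | ring1 | (exfalso; omega)
  simp_rw [key, Finset.sum_add_distrib,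
    sum_ind U 0 (by omega) (A^2), sum_ind U 1 (by omega) (B^2),
    sum_ind U (u+1) (by omega) (C^2)]

lemma canon4 (U u v : ℕ) (hu1 : 1 ≤ u) (huU : u ≤ U) (hv1 : 1 ≤ v) (hvU : v ≤ U)
    (huv : u ≠ v) (A B C D : ℝ) :
    ∑ j : Fin (U+2), (if j.val = 0 then A else if j.val = 1 then B else
      if j.val = u+1 then C else if j.val = v+1 then D else 0)^2
      = A^2 + B^2 + C^2 + D^2 := by
  have key : ∀ j : Fin (U+2),
      (if j.val = 0 then A else if j.val = 1 then B else if j.val = u+1 then C else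
        if j.val = v+1 then D else 0)^2
      = (if j.val = 0 then A^2 else 0) + (if j.val = 1 then B^2 else 0)
        + (if j.val = u+1 then C^2 else 0) + (if j.val = v+1 then D^2 else 0) := by
    intro j; split_ifs <;> first | ring1 | (exfalso; omega)
  simp_rw [key, Finset.sum_add_distrib,
    sum_ind U 0 (by omega) (A^2), sum_ind U 1 (by omega) (B^2),
    sum_ind U (u+1) (by omega) (C^2), sum_ind U (v+1) (by omega) (D^2)]

lemma dist_eq_canon2 (U : ℕ) (f g : ℕ → ℝ) (A B : ℝ)
    (h : ∀ j, f j - g j = if j = 0 then A else if j = 1 then B else 0) :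
    dist (mkPt U f) (mkPt U g) = Real.sqrt (A^2 + B^2) := by
  rw [dist_mkPt, ← canon2 U A B]
  congr 1
  exact Finset.sum_congr rfl fun j _ => by rw [h j.val]

lemma dist_eq_canon3 (U u : ℕ) (hu1 : 1 ≤ u) (huU : u ≤ U) (f g : ℕ → ℝ) (A B C : ℝ)
    (h : ∀ j, f j - g j = if j = 0 then A else if j = 1 then B else
      if j = u+1 then C else 0) :
    dist (mkPt U f) (mkPt U g) = Real.sqrt (A^2 + B^2 + C^2) := by
  rw [dist_mkPt, ← canon3 U u hu1 huU A B C]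
  congr 1
  exact Finset.sum_congr rfl fun j _ => by rw [h j.val]

lemma dist_eq_canon4 (U u v : ℕ) (hu1 : 1 ≤ u) (huU : u ≤ U) (hv1 : 1 ≤ v) (hvU : v ≤ U)
    (huv : u ≠ v) (f g : ℕ → ℝ) (A B C D : ℝ)
    (h : ∀ j, f j - g j = if j = 0 then A else if j = 1 then B else
      if j = u+1 then C else if j = v+1 then D else 0) :
    dist (mkPt U f) (mkPt U g) = Real.sqrt (A^2 + B^2 + C^2 + D^2) := by
  rw [dist_mkPt, ← canon4 U u v hu1 huU hv1 hvU huv A B C D]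
  congr 1
  exact Finset.sum_congr rfl fun j _ => by rw [h j.val]

section DistLemmas

lemma dist_w_y1 (U : ℕ) : dist (wPt U) (y1Pt U) = 1 := by
  unfold wPt y1Pt
  have h := dist_eq_canon2 U (fun j => if j ≤ 1 then 1 else 0) (fun j => if j = 0 then 1 else 0) 0 1 (fun j => by split_ifs <;> first | (exfalso; omega) | norm_num)
  rw [h]; norm_num

lemma dist_w_y2 (U : ℕ) : dist (wPt U) (y2Pt U) = 1 := by
  unfold wPt y2Pt
  have h := dist_eq_canon2 U (fun j => if j ≤ 1 then 1 else 0) (fun j => if j = 1 then 1 else 0) 1 0 (fun j => by split_ifs <;> first | (exfalso; omega) | norm_num)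
  rw [h]; norm_num

lemma dist_x1_y1 (U : ℕ) : dist (x1Pt U) (y1Pt U) = 1 := by
  unfold x1Pt y1Pt
  have h := dist_eq_canon2 U (fun j => if j = 0 then 1 else if j = 1 then -1 else 0) (fun j => if j = 0 then 1 else 0) 0 (-1) (fun j => by split_ifs <;> first | (exfalso; omega) | norm_num)
  rw [h]; norm_num

lemma dist_s_y1 (U : ℕ) : dist (sPt U) (y1Pt U) = 1 := by
  unfold sPt y1Pt
  have h := dist_eq_canon2 U (fun _ => 0) (fun j => if j = 0 then 1 else 0) (-1) 0 (fun j => by split_ifs <;> first | (exfalso; omega) | norm_num)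
  rw [h]; norm_num

lemma dist_s_y2 (U : ℕ) : dist (sPt U) (y2Pt U) = 1 := by
  unfold sPt y2Pt
  have h := dist_eq_canon2 U (fun _ => 0) (fun j => if j = 1 then 1 else 0) 0 (-1) (fun j => by split_ifs <;> first | (exfalso; omega) | norm_num)
  rw [h]; norm_num

lemma dist_x2_y2 (U : ℕ) : dist (x2Pt U) (y2Pt U) = 1 := by
  unfold x2Pt y2Pt
  have h := dist_eq_canon2 U (fun j => if j = 0 then -1 else if j = 1 then 1 else 0) (fun j => if j = 1 then 1 else 0) (-1) 0 (fun j => by split_ifs <;> first | (exfalso; omega) | norm_num)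
  rw [h]; norm_num

lemma dist_x1_y2 (U : ℕ) : dist (x1Pt U) (y2Pt U) = Real.sqrt 5 := by
  unfold x1Pt y2Pt
  have h := dist_eq_canon2 U (fun j => if j = 0 then 1 else if j = 1 then -1 else 0) (fun j => if j = 1 then 1 else 0) 1 (-2) (fun j => by split_ifs <;> first | (exfalso; omega) | norm_num)
  rw [h]; norm_num

lemma dist_x2_y1 (U : ℕ) : dist (x2Pt U) (y1Pt U) = Real.sqrt 5 := by
  unfold x2Pt y1Pt
  have h := dist_eq_canon2 U (fun j => if j = 0 then -1 else if j = 1 then 1 else 0) (fun j => if j = 0 then 1 else 0) (-2) 1 (fun j => by split_ifs <;> first | (exfalso; omega) | norm_num)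
  rw [h]; norm_num

lemma dist_w_a (U v : ℕ) (hv1 : 1 ≤ v) (hvU : v ≤ U) : dist (wPt U) (aPt U v) = 1 := by
  unfold wPt aPt
  have h := dist_eq_canon3 U v hv1 hvU (fun j => if j ≤ 1 then 1 else 0) (fun j => if j ≤ 1 then 1 else if j = v + 1 then 1 else 0) 0 0 (-1) (fun j => by split_ifs <;> first | (exfalso; omega) | norm_num)
  rw [h]; norm_num

lemma dist_x1_a (U v : ℕ) (hv1 : 1 ≤ v) (hvU : v ≤ U) : dist (x1Pt U) (aPt U v) = Real.sqrt 5 := by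
  unfold x1Pt aPt
  have h := dist_eq_canon3 U v hv1 hvU (fun j => if j = 0 then 1 else if j = 1 then -1 else 0) (fun j => if j ≤ 1 then 1 else if j = v + 1 then 1 else 0) 0 (-2) (-1) (fun j => by split_ifs <;> first | (exfalso; omega) | norm_num)
  rw [h]; norm_num

lemma dist_x2_a (U v : ℕ) (hv1 : 1 ≤ v) (hvU : v ≤ U) : dist (x2Pt U) (aPt U v) = Real.sqrt 5 := by
  unfold x2Pt aPt
  have h := dist_eq_canon3 U v hv1 hvU (fun j => if j = 0 then -1 else if j = 1 then 1 else 0) (fun j => if j ≤ 1 then 1 else if j = v + 1 then 1 else 0) (-2) 0 (-1) (fun j => by split_ifs <;> first | (exfalso; omega) | norm_num)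
  rw [h]; norm_num

lemma dist_s_a (U v : ℕ) (hv1 : 1 ≤ v) (hvU : v ≤ U) : dist (sPt U) (aPt U v) = Real.sqrt 3 := by
  unfold sPt aPt
  have h := dist_eq_canon3 U v hv1 hvU (fun _ => 0) (fun j => if j ≤ 1 then 1 else if j = v + 1 then 1 else 0) (-1) (-1) (-1) (fun j => by split_ifs <;> first | (exfalso; omega) | norm_num)
  rw [h]; norm_num

lemma dist_b_y1 (U u : ℕ) (hu1 : 1 ≤ u) (huU : u ≤ U) : dist (bPt U u) (y1Pt U) = Real.sqrt 2 := by
  unfold bPt y1Pt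
  have h := dist_eq_canon3 U u hu1 huU (fun j => if j = u + 1 ∧ 2 ≤ j then 1 else 0) (fun j => if j = 0 then 1 else 0) (-1) 0 1 (fun j => by split_ifs <;> first | (exfalso; omega) | norm_num)
  rw [h]; norm_num

lemma dist_b_y2 (U u : ℕ) (hu1 : 1 ≤ u) (huU : u ≤ U) : dist (bPt U u) (y2Pt U) = Real.sqrt 2 := by
  unfold bPt y2Pt
  have h := dist_eq_canon3 U u hu1 huU (fun j => if j = u + 1 ∧ 2 ≤ j then 1 else 0) (fun j => if j = 1 then 1 else 0) 0 (-1) 1 (fun j => by split_ifs <;> first | (exfalso; omega) | norm_num)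
  rw [h]; norm_num

lemma dist_b_a_same (U u : ℕ) (hu1 : 1 ≤ u) : dist (bPt U u) (aPt U u) = Real.sqrt 2 := by
  unfold bPt aPt
  have h := dist_eq_canon2 U (fun j => if j = u + 1 ∧ 2 ≤ j then 1 else 0) (fun j => if j ≤ 1 then 1 else if j = u + 1 then 1 else 0) (-1) (-1) (fun j => by split_ifs <;> first | (exfalso; omega) | norm_num)
  rw [h]; norm_num

lemma dist_b_a_ne (U u v : ℕ) (hu1 : 1 ≤ u) (huU : u ≤ U) (hv1 : 1 ≤ v) (hvU : v ≤ U)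
    (huv : u ≠ v) : dist (bPt U u) (aPt U v) = 2 := by
  unfold bPt aPt
  have h := dist_eq_canon4 U u v hu1 huU hv1 hvU huv (fun j => if j = u + 1 ∧ 2 ≤ j then 1 else 0) (fun j => if j ≤ 1 then 1 else if j = v + 1 then 1 else 0) (-1) (-1) 1 (-1) (fun j => by split_ifs <;> first | (exfalso; omega) | norm_num)
  rw [h]
  rw [show ((-1:ℝ))^2+(-1)^2+1^2+(-1)^2 = 2^2 by norm_num, Real.sqrt_sq (by norm_num : (0:ℝ) ≤ 2)]

end DistLemmas

section Eval
variable (U m k : ℕ) (t s : ℕ → ℕ)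

lemma Pseq_0 : Pseq U m t 0 = wPt U := by
  unfold Pseq; split_ifs <;> first | rfl | contradiction | (exfalso; omega)

lemma Pseq_1 : Pseq U m t 1 = x1Pt U := by
  unfold Pseq; split_ifs <;> first | rfl | contradiction | (exfalso; omega)

lemma Pseq_s {i : ℕ} (h2 : 2 ≤ i) (he : i % 2 = 0) (hle : i ≤ 2*m+2) :
    Pseq U m t i = sPt U := by
  unfold Pseq; split_ifs <;> first | rfl | contradiction | (exfalso; omega)

lemma Pseq_b {i : ℕ} (ho : i % 2 = 1) (h3 : 3 ≤ i) (hle : i ≤ 2*m+1) :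
    Pseq U m t i = bPt U (t ((i-3)/2)) := by
  unfold Pseq; split_ifs <;> first | rfl | contradiction | (exfalso; omega)

lemma Pseq_x2 : Pseq U m t (2*m+3) = x2Pt U := by
  unfold Pseq; split_ifs <;> first | rfl | contradiction | (exfalso; omega)

lemma Pseq_last : Pseq U m t (2*m+4) = wPt U := by
  unfold Pseq; split_ifs <;> first | rfl | contradiction | (exfalso; omega)

lemma Qseq_y1 {q : ℕ} (h : q % 3 = 0) : Qseq U k s q = y1Pt U := by
  unfold Qseq; split_ifs <;> first | rfl | contradiction | (exfalso; omega)

lemma Qseq_a {q : ℕ} (h : q % 3 = 1) : Qseq U k s q = aPt U (s (q / 3)) := by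
  unfold Qseq; split_ifs <;> first | rfl | contradiction | (exfalso; omega)

lemma Qseq_y2 {q : ℕ} (h : q % 3 = 2) : Qseq U k s q = y2Pt U := by
  unfold Qseq; split_ifs <;> first | rfl | contradiction | (exfalso; omega)

end Eval

lemma nat_mono' (u : ℕ → ℕ) (N : ℕ) (hstep : ∀ n, n + 1 ≤ N → u n ≤ u (n+1)) :
    ∀ a b, a ≤ b → b ≤ N → u a ≤ u b := by
  intro a b hab
  induction b, hab using Nat.le_induction with
  | base => intro _; exact le_refl _
  | succ b hab ih => intro hbN; exact le_trans (ih (by omega)) (hstep b hbN)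

lemma nat_ivt (u : ℕ → ℕ) (hstep : ∀ n, u (n+1) ≤ u n + 1) :
    ∀ a b v, a ≤ b → u a ≤ v → v ≤ u b → ∃ n, a ≤ n ∧ n ≤ b ∧ u n = v := by
  intro a b v hab
  induction b, hab using Nat.le_induction with
  | base => intro h1 h2; exact ⟨a, le_refl _, le_refl _, le_antisymm h1 h2⟩
  | succ b hab ih =>
    intro h1 h2
    by_cases hc : v ≤ u b
    · obtain ⟨n, hn1, hn2, hn3⟩ := ih h1 hc
      exact ⟨n, hn1, by omega, hn3⟩
    · have : v = u (b+1) := by have := hstep b; omega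
      exact ⟨b+1, by omega, le_refl _, this.symm⟩


/-- The matched traversal: sweep Q at w, sweep P to the matched b, diagonal step,
sweep P to the end at y2, sweep rest of Q at w. -/
def Fyes (m i0 j0 : ℕ) : ℕ → ℕ × ℕ := fun n =>
  if n ≤ 3*i0 then (0, n)
  else if n ≤ 3*i0 + 2*j0 + 2 then (n - 3*i0, 3*i0)
  else if n = 3*i0 + 2*j0 + 3 then (2*j0+3, 3*i0+1)
  else if n ≤ 3*i0 + 2*m + 4 then (n - 3*i0 - 1, 3*i0+2)
  else (2*m+4, n - 2*m - 3)

lemma one_le_sqrt2 : (1:ℝ) ≤ Real.sqrt 2 := by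
  have h := Real.sqrt_le_sqrt (by norm_num : (1:ℝ) ≤ 2)
  rwa [Real.sqrt_one] at h

lemma sqrt3_le_sqrt5 : Real.sqrt 3 ≤ Real.sqrt 5 := Real.sqrt_le_sqrt (by norm_num)

lemma sqrt3_le_two : Real.sqrt 3 ≤ 2 := by
  have h := Real.sqrt_le_sqrt (by norm_num : (3:ℝ) ≤ 4)
  rwa [show (4:ℝ) = 2^2 by norm_num, Real.sqrt_sq (by norm_num : (0:ℝ) ≤ 2)] at h

lemma trav_yes (U k m : ℕ) (hk : 1 ≤ k) (hm : 1 ≤ m) (s t : ℕ → ℕ)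
    (hs : ∀ i < k, 1 ≤ s i ∧ s i ≤ U) (ht : ∀ j < m, 1 ≤ t j ∧ t j ≤ U)
    (i0 j0 : ℕ) (hi0 : i0 < k) (hj0 : j0 < m) (r : ℝ)
    (hr2 : Real.sqrt 2 ≤ r) (hba : dist (bPt U (t j0)) (aPt U (s i0)) ≤ r) :
    ∃ T : List (ℕ × ℕ), IsTraversal (2*m+5) (3*k) T ∧
      ∀ ij ∈ T, dist (Pseq U m t ij.1) (Qseq U k s ij.2) ≤ r := by
  have h1r : (1:ℝ) ≤ r := le_trans one_le_sqrt2 hr2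
  refine ⟨(List.range (2*m+3*k+3)).map (Fyes m i0 j0), ⟨?_, ?_, ?_⟩, ?_⟩
  · -- head
    rw [List.head?_map, List.head?_range]
    rw [if_neg (by omega)]
    simp only [Option.map_some]
    congr 1
  · -- last
    rw [List.getLast?_map, List.getLast?_eq_getElem?, List.length_range,
      List.getElem?_range (by omega : 2*m+3*k+3-1 < 2*m+3*k+3)]
    simp only [Option.map_some]
    congr 1
    simp only [Fyes]
    split_ifs <;> first | (exfalso; omega) | (simp [Prod.ext_iff]; omega)
  · -- chain
    refine (List.isChain_map _).mpr ?_
    rw [show 2*m+3*k+3 = (2*m+3*k+2)+1 from rfl]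
    refine (List.isChain_range_succ _ (2*m+3*k+2)).mpr ?_
    intro n hn
    simp only [Fyes, TravStep]
    split_ifs <;> simp [Prod.ext_iff] <;> omega
  · -- bound
    intro ij hij
    rw [List.mem_map] at hij
    obtain ⟨n, hn, rfl⟩ := hij
    rw [List.mem_range] at hn
    have hcase : n ≤ 3*i0 ∨ (3*i0 < n ∧ n ≤ 3*i0+2*j0+2) ∨ n = 3*i0+2*j0+3 ∨
        (3*i0+2*j0+3 < n ∧ n ≤ 3*i0+2*m+4) ∨ (3*i0+2*m+4 < n ∧ n < 2*m+3*k+3) := by omega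
    rcases hcase with hA | hB | hD | hC | hE
    · -- phase A : (0, n) against w
      have hF : Fyes m i0 j0 n = (0, n) := by
        simp only [Fyes]; split_ifs <;> first | rfl | (exfalso; omega)
      rw [hF]
      simp only
      rw [Pseq_0]
      have hmod : n % 3 = 0 ∨ n % 3 = 1 ∨ n % 3 = 2 := by omega
      rcases hmod with h | h | h
      · rw [Qseq_y1 _ _ _ h, dist_w_y1]; exact h1r
      · rw [Qseq_a _ _ _ h, dist_w_a _ _ (hs (n/3) (by omega)).1 (hs (n/3) (by omega)).2]
        exact h1r
      · rw [Qseq_y2 _ _ _ h, dist_w_y2]; exact h1r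
    · -- phase B : (n - 3i0, 3i0) against y1
      have hF : Fyes m i0 j0 n = (n - 3*i0, 3*i0) := by
        simp only [Fyes]; split_ifs <;> first | rfl | (exfalso; omega)
      rw [hF]
      simp only
      rw [Qseq_y1 _ _ _ (by omega)]
      set p := n - 3*i0 with hp
      have hcase2 : p = 1 ∨ (p % 2 = 0 ∧ 2 ≤ p ∧ p ≤ 2*m+2) ∨
          (p % 2 = 1 ∧ 3 ≤ p ∧ p ≤ 2*m+1) := by omega
      rcases hcase2 with h | ⟨h1, h2, h3⟩ | ⟨h1, h2, h3⟩
      · rw [h, Pseq_1, dist_x1_y1]; exact h1r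
      · rw [Pseq_s _ _ _ h2 h1 h3, dist_s_y1]; exact h1r
      · rw [Pseq_b _ _ _ h1 h2 h3,
          dist_b_y1 _ _ (ht ((p-3)/2) (by omega)).1 (ht ((p-3)/2) (by omega)).2]
        exact hr2
    · -- diagonal step : (2j0+3, 3i0+1)
      have hF : Fyes m i0 j0 n = (2*j0+3, 3*i0+1) := by
        simp only [Fyes]; split_ifs <;> first | rfl | (exfalso; omega)
      rw [hF]
      simp only
      rw [Pseq_b _ _ _ (by omega) (by omega) (by omega),
        Qseq_a _ _ _ (by omega : (3*i0+1) % 3 = 1),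
        show (2*j0+3-3)/2 = j0 by omega, show (3*i0+1)/3 = i0 by omega]
      exact hba
    · -- phase C : (n - 3i0 - 1, 3i0+2) against y2
      have hF : Fyes m i0 j0 n = (n - 3*i0 - 1, 3*i0+2) := by
        simp only [Fyes]; split_ifs <;> first | rfl | (exfalso; omega)
      rw [hF]
      simp only
      rw [Qseq_y2 _ _ _ (by omega)]
      set p := n - 3*i0 - 1 with hp
      have hcase2 : p = 2*m+3 ∨ (p % 2 = 0 ∧ 2 ≤ p ∧ p ≤ 2*m+2) ∨
          (p % 2 = 1 ∧ 3 ≤ p ∧ p ≤ 2*m+1) := by omega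
      rcases hcase2 with h | ⟨h1, h2, h3⟩ | ⟨h1, h2, h3⟩
      · rw [h, Pseq_x2, dist_x2_y2]; exact h1r
      · rw [Pseq_s _ _ _ h2 h1 h3, dist_s_y2]; exact h1r
      · rw [Pseq_b _ _ _ h1 h2 h3,
          dist_b_y2 _ _ (ht ((p-3)/2) (by omega)).1 (ht ((p-3)/2) (by omega)).2]
        exact hr2
    · -- phase E : (2m+4, n - 2m - 3) against w
      have hF : Fyes m i0 j0 n = (2*m+4, n - 2*m - 3) := by
        simp only [Fyes]; split_ifs <;> first | rfl | (exfalso; omega)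
      rw [hF]
      simp only
      rw [Pseq_last]
      set q := n - 2*m - 3 with hq
      have hqk : q / 3 < k := by omega
      have hmod : q % 3 = 0 ∨ q % 3 = 1 ∨ q % 3 = 2 := by omega
      rcases hmod with h | h | h
      · rw [Qseq_y1 _ _ _ h, dist_w_y1]; exact h1r
      · rw [Qseq_a _ _ _ h, dist_w_a _ _ (hs (q/3) hqk).1 (hs (q/3) hqk).2]
        exact h1r
      · rw [Qseq_y2 _ _ _ h, dist_w_y2]; exact h1r

lemma trav_lower (U k m : ℕ) (hk : 1 ≤ k) (hm : 1 ≤ m) (s t : ℕ → ℕ)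
    (hs : ∀ i < k, 1 ≤ s i ∧ s i ≤ U) (ht : ∀ j < m, 1 ≤ t j ∧ t j ≤ U)
    (hdisj : ¬ ∃ i < k, ∃ j < m, s i = t j)
    (r : ℝ) (T : List (ℕ × ℕ)) (hT : IsTraversal (2*m+5) (3*k) T)
    (hbnd : ∀ ij ∈ T, dist (Pseq U m t ij.1) (Qseq U k s ij.2) ≤ r) :
    Real.sqrt 3 ≤ r := by
  by_contra hcon
  push_neg at hcon
  obtain ⟨hhead, hlast, hchain⟩ := hT
  have hne : T ≠ [] := by intro h; rw [h] at hhead; simp at hhead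
  have hlen : 1 ≤ T.length := by
    cases T with | nil => exact absurd rfl hne | cons a l => simp
  set N := T.length - 1 with hN
  set u1 : ℕ → ℕ := fun n => (T.getD n (0,0)).1 with hu1
  set u2 : ℕ → ℕ := fun n => (T.getD n (0,0)).2 with hu2
  -- endpoint values
  have h0 : T.getD 0 (0,0) = (0,0) := by
    cases T with
    | nil => exact absurd rfl hne
    | cons a l => simp only [List.head?_cons, Option.some.injEq] at hhead; simpa using hhead
  have hNN : T.getD N (0,0) = (2*m+4, 3*k-1) := by
    rw [List.getLast?_eq_getElem?] at hlast
    have hNlt : N < T.length := by omega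
    rw [List.getElem?_eq_getElem hNlt] at hlast
    rw [List.getD_eq_getElem _ _ hNlt]
    simp only [Option.some.injEq] at hlast
    rw [hlast]
    have : 2*m+5-1 = 2*m+4 := by omega
    rw [this]
  -- steps
  have hstep : ∀ n, n + 1 ≤ N → TravStep (T.getD n (0,0)) (T.getD (n+1) (0,0)) := by
    intro n hn
    have h1 : n < T.length - 1 := by omega
    have := List.isChain_iff_getElem.mp hchain n (by omega)
    rwa [← List.getD_eq_getElem _ (0,0) (by omega), ← List.getD_eq_getElem _ (0,0) (by omega)]
      at this
  have step1 : ∀ n, u1 (n+1) ≤ u1 n + 1 := by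
    intro n
    by_cases hn : n + 1 ≤ N
    · exact (hstep n hn).2.1
    · have : T.getD (n+1) (0,0) = (0,0) := by
        apply List.getD_eq_default
        omega
      rw [hu1]; simp only [this]; omega
  have step2 : ∀ n, u2 (n+1) ≤ u2 n + 1 := by
    intro n
    by_cases hn : n + 1 ≤ N
    · exact (hstep n hn).2.2.2.1
    · have : T.getD (n+1) (0,0) = (0,0) := by
        apply List.getD_eq_default
        omega
      rw [hu2]; simp only [this]; omega
  have mono1 : ∀ a b, a ≤ b → b ≤ N → u1 a ≤ u1 b :=
    nat_mono' u1 N (fun n hn => (hstep n hn).1)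
  have mono2 : ∀ a b, a ≤ b → b ≤ N → u2 a ≤ u2 b :=
    nat_mono' u2 N (fun n hn => (hstep n hn).2.2.1)
  have hu10 : u1 0 = 0 := by rw [hu1]; simp only [h0]
  have hu20 : u2 0 = 0 := by rw [hu2]; simp only [h0]
  have hu1N : u1 N = 2*m+4 := by rw [hu1]; simp only [hNN]
  have hu2N : u2 N = 3*k-1 := by rw [hu2]; simp only [hNN]
  -- membership of getD values
  have hmem : ∀ n, n ≤ N → T.getD n (0,0) ∈ T := by
    intro n hn
    rw [List.getD_eq_getElem _ _ (by omega)]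
    exact List.getElem_mem _
  -- key distance facts
  have hbnd' : ∀ n, n ≤ N → dist (Pseq U m t (u1 n)) (Qseq U k s (u2 n)) ≤ r :=
    fun n hn => hbnd _ (hmem n hn)
  have h35 := sqrt3_le_sqrt5
  have h32 := sqrt3_le_two
  -- find n1 with first coordinate 1 (the x1 position)
  obtain ⟨n1, -, hn1N, hn1⟩ := nat_ivt u1 step1 0 N 1 (by omega) (by omega) (by omega)
  obtain ⟨n3, -, hn3N, hn3⟩ := nat_ivt u1 step1 0 N (2*m+3) (by omega) (by omega) (by omega)
  set q1 := u2 n1 with hq1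
  set q2 := u2 n3 with hq2
  have hq1le : q1 ≤ 3*k-1 := hu2N ▸ mono2 n1 N hn1N (le_refl _)
  have hq2le : q2 ≤ 3*k-1 := hu2N ▸ mono2 n3 N hn3N (le_refl _)
  -- q1 ≡ 0 mod 3
  have hd1 : dist (Pseq U m t 1) (Qseq U k s q1) ≤ r := hn1 ▸ hbnd' n1 hn1N
  rw [Pseq_1] at hd1
  have hq1mod : q1 % 3 = 0 := by
    by_contra hq
    have hmod : q1 % 3 = 1 ∨ q1 % 3 = 2 := by omega
    rcases hmod with h | h
    · rw [Qseq_a _ _ _ h,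
        dist_x1_a _ _ (hs (q1/3) (by omega)).1 (hs (q1/3) (by omega)).2] at hd1
      linarith
    · rw [Qseq_y2 _ _ _ h, dist_x1_y2] at hd1
      linarith
  -- q2 ≡ 2 mod 3
  have hd3 : dist (Pseq U m t (2*m+3)) (Qseq U k s q2) ≤ r := hn3 ▸ hbnd' n3 hn3N
  rw [Pseq_x2] at hd3
  have hq2mod : q2 % 3 = 2 := by
    by_contra hq
    have hmod : q2 % 3 = 0 ∨ q2 % 3 = 1 := by omega
    rcases hmod with h | h
    · rw [Qseq_y1 _ _ _ h, dist_x2_y1] at hd3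
      linarith
    · rw [Qseq_a _ _ _ h,
        dist_x2_a _ _ (hs (q2/3) (by omega)).1 (hs (q2/3) (by omega)).2] at hd3
      linarith
  -- n1 ≤ n3
  have hn13 : n1 ≤ n3 := by
    by_contra hcon2
    have := mono1 n3 n1 (by omega) hn1N
    omega
  have hq12 : q1 ≤ q2 := mono2 n1 n3 hn13 hn3N
  have hq12' : q1 + 1 ≤ q2 := by omega
  -- find n2 between n1 and n3 with second coordinate q1 + 1
  obtain ⟨n2, hn12, hn23, hn2⟩ := nat_ivt u2 step2 n1 n3 (q1+1) hn13 (by omega) hq12'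
  set p := u1 n2 with hp
  have hp1 : 1 ≤ p := hn1 ▸ mono1 n1 n2 hn12 (le_trans hn23 hn3N)
  have hp2 : p ≤ 2*m+3 := hn3 ▸ mono1 n2 n3 hn23 hn3N
  have hd2 : dist (Pseq U m t p) (Qseq U k s (q1+1)) ≤ r := hn2 ▸ hbnd' n2 (le_trans hn23 hn3N)
  have hik : (q1+1)/3 < k := by omega
  rw [Qseq_a _ _ _ (by omega : (q1+1) % 3 = 1)] at hd2
  set i := (q1+1)/3 with hi
  have hcase : p = 1 ∨ p = 2*m+3 ∨ (p % 2 = 0 ∧ 2 ≤ p ∧ p ≤ 2*m+2) ∨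
      (p % 2 = 1 ∧ 3 ≤ p ∧ p ≤ 2*m+1) := by omega
  rcases hcase with h | h | ⟨h1, h2, h3⟩ | ⟨h1, h2, h3⟩
  · rw [h, Pseq_1, dist_x1_a _ _ (hs i hik).1 (hs i hik).2] at hd2
    linarith
  · rw [h, Pseq_x2, dist_x2_a _ _ (hs i hik).1 (hs i hik).2] at hd2
    linarith
  · rw [Pseq_s _ _ _ h2 h1 h3, dist_s_a _ _ (hs i hik).1 (hs i hik).2] at hd2
    linarith
  · rw [Pseq_b _ _ _ h1 h2 h3] at hd2
    set j := (p-3)/2 with hj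
    have hjm : j < m := by omega
    have hne2 : t j ≠ s i := by
      intro he
      exact hdisj ⟨i, hik, j, hjm, he.symm⟩
    rw [dist_b_a_ne _ _ _ (ht j hjm).1 (ht j hjm).2 (hs i hik).1 (hs i hik).2 hne2] at hd2
    linarith

lemma sqrt2_le_two : Real.sqrt 2 ≤ 2 := by
  have h := Real.sqrt_le_sqrt (by norm_num : (2:ℝ) ≤ 4)
  rwa [show (4:ℝ) = 2^2 by norm_num, Real.sqrt_sq (by norm_num : (0:ℝ) ≤ 2)] at h

lemma ddF_bddBelow (U k m : ℕ) (s t : ℕ → ℕ) :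
    BddBelow { r : ℝ | ∃ T : List (ℕ × ℕ), IsTraversal (2*m+5) (3*k) T ∧
      ∀ ij ∈ T, dist (Pseq U m t ij.1) (Qseq U k s ij.2) ≤ r } := by
  refine ⟨0, fun r hr => ?_⟩
  obtain ⟨T, hT, hb⟩ := hr
  exact le_trans dist_nonneg (hb (0,0) (List.mem_of_mem_head? hT.1))

/-- the high-dimensional reduction gadgets satisfy
`d_dF(P,Q) ≤ √2` if `S ∩ T ≠ ∅` and `d_dF(P,Q) ≥ √3` if `S ∩ T = ∅`. -/
theorem high_dim_reduction (U k m : ℕ) (hk : 1 ≤ k) (hm : 1 ≤ m)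
    (s t : ℕ → ℕ)
    (hs : ∀ i < k, 1 ≤ s i ∧ s i ≤ U) (ht : ∀ j < m, 1 ≤ t j ∧ t j ≤ U)
    (hsinj : ∀ i < k, ∀ i' < k, s i = s i' → i = i')
    (htinj : ∀ j < m, ∀ j' < m, t j = t j' → j = j') :
    ((∃ i < k, ∃ j < m, s i = t j) →
      ddF (2 * m + 5) (3 * k) (Pseq U m t) (Qseq U k s) ≤ Real.sqrt 2) ∧
    ((¬ ∃ i < k, ∃ j < m, s i = t j) →
      Real.sqrt 3 ≤ ddF (2 * m + 5) (3 * k) (Pseq U m t) (Qseq U k s)) := by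
  constructor
  · rintro ⟨i0, hi0, j0, hj0, heq⟩
    have hba : dist (bPt U (t j0)) (aPt U (s i0)) ≤ Real.sqrt 2 := by
      rw [heq, dist_b_a_same U (t j0) (ht j0 hj0).1]
    obtain ⟨T, hT, hb⟩ := trav_yes U k m hk hm s t hs ht i0 j0 hi0 hj0
      (Real.sqrt 2) (le_refl _) hba
    exact csInf_le (ddF_bddBelow U k m s t) ⟨T, hT, hb⟩
  · intro hdisj
    have hba : dist (bPt U (t 0)) (aPt U (s 0)) ≤ 2 := by
      by_cases h : t 0 = s 0
      · rw [h, dist_b_a_same U (s 0) (hs 0 hk).1]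
        exact sqrt2_le_two
      · rw [dist_b_a_ne U (t 0) (s 0) (ht 0 hm).1 (ht 0 hm).2 (hs 0 hk).1 (hs 0 hk).2 h]
    obtain ⟨T0, hT0, hb0⟩ := trav_yes U k m hk hm s t hs ht 0 0 hk hm 2 sqrt2_le_two hba
    refine le_csInf ⟨2, T0, hT0, hb0⟩ ?_
    rintro b ⟨T, hT, hb⟩
    exact trav_lower U k m hk hm s t hs ht hdisj b T hT hb
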